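/- Lifting lemma for matching through an injective environment encoding: let E be as in the injectivity lemma (mapping distinct names to patterns with distinct name-function head symbols), extended homomorphically to terms. If M' is a closed term, M is a term (possibly with variables), and σ is a substitution on patterns with E(M') = σ(E(M)), then there exists a substitution σ' on terms such that M' = σ'(M) and for every variable x occurring in M, E(σ'(x)) = σ(x). -/

import Mathlib

/-- First-order terms over function symbols `F`, with natural-number variables. -/
inductive Trm (F : Type) : Type
  | var : Nat → Trm F
  | app : F → List (Trm F) → Trm F

namespace Trm

variable {F : Type}

/-- Homomorphic extension of a substitution to terms. -/
def subst (σ : Nat → Trm F) : Trm F → Trm F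
  | var x => σ x
  | app f ts => app f (ts.attach.map (fun t => subst σ t.1))
decreasing_by
  simp_wf
  have := List.sizeOf_lt_of_mem t.2
  omega

/-- `VarOcc x t` : variable `x` occurs in term `t`. -/
inductive VarOcc (x : Nat) : Trm F → Prop
  | var : VarOcc x (var x)
  | app {f : F} {ts : List (Trm F)} {t : Trm F} : t ∈ ts → VarOcc x t → VarOcc x (app f ts)

end Trm

/-- A term is closed when no variable occurs in it. -/
def ClosedT {F : Type} (t : Trm F) : Prop := ∀ x, ¬ Trm.VarOcc x t

/-- A fact is an atom `P(t1,...,tn)`. -/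
structure Fct (P F : Type) where
  pred : P
  args : List (Trm F)

def Fct.subst {P F : Type} (σ : Nat → Trm F) (a : Fct P F) : Fct P F :=
  ⟨a.pred, a.args.map (Trm.subst σ)⟩

def Fct.Closed {P F : Type} (a : Fct P F) : Prop := ∀ t ∈ a.args, ClosedT t

def Fct.VarOcc {P F : Type} (x : Nat) (a : Fct P F) : Prop := ∃ t ∈ a.args, Trm.VarOcc x t

/-- A Horn clause: a finite multiset of hypotheses and a conclusion. -/
structure Clause (P F : Type) where
  hyp : Multiset (Fct P F)
  concl : Fct P F

/-- `(H1 ⇒ C1)` subsumes `(H2 ⇒ C2)` iff some substitution σ has `σ C1 = C2` and `σ H1 ⊆ H2`. -/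
def Subsumes {P F : Type} (c1 c2 : Clause P F) : Prop :=
  ∃ σ : Nat → Trm F, Fct.subst σ c1.concl = c2.concl ∧ c1.hyp.map (Fct.subst σ) ≤ c2.hyp

/-- Terms built from variables, names, and function symbols. -/
inductive NTrm (F N : Type) : Type
  | var : Nat → NTrm F N
  | nm : N → NTrm F N
  | app : F → List (NTrm F N) → NTrm F N

namespace NTrm

variable {F N : Type}

/-- Substitutions act on variables only (leaving names fixed), extended homomorphically. -/
def subst (σ : Nat → NTrm F N) : NTrm F N → NTrm F N
  | var x => σ x
  | nm a => nm a
  | app f ts => app f (ts.attach.map (fun t => subst σ t.1))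
decreasing_by
  simp_wf
  have := List.sizeOf_lt_of_mem t.2
  omega

/-- An environment `E` acts on names only (leaving variables fixed), extended homomorphically. -/
def applyEnv (E : N → NTrm F N) : NTrm F N → NTrm F N
  | var x => var x
  | nm a => E a
  | app f ts => app f (ts.attach.map (fun t => applyEnv E t.1))
decreasing_by
  simp_wf
  have := List.sizeOf_lt_of_mem t.2
  omega

/-- `VarOcc x t` : variable `x` occurs in term `t`. -/
inductive VarOcc (x : Nat) : NTrm F N → Prop
  | var : VarOcc x (var x)
  | app {f : F} {ts : List (NTrm F N)} {t : NTrm F N} :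
      t ∈ ts → VarOcc x t → VarOcc x (app f ts)

end NTrm

/-- Encoding of terms (with variables and names) into patterns over `F ⊕ N`:
variables are fixed, each name `a` is replaced by the pattern `E a`, and the encoding acts
homomorphically on function applications. -/
def encodeN {F N : Type} (E : N → Trm (F ⊕ N)) : NTrm F N → Trm (F ⊕ N)
  | .var x => Trm.var x
  | .nm a => E a
  | .app f ts => Trm.app (Sum.inl f) (ts.attach.map (fun t => encodeN E t.1))
decreasing_by
  simp_wf
  have := List.sizeOf_lt_of_mem t.2
  omega


section Aux

variable {F N : Type}

theorem NTrm.subst_var (σ : Nat → NTrm F N) (x : Nat) :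
    NTrm.subst σ (.var x) = σ x := by rw [NTrm.subst]

theorem NTrm.subst_nm (σ : Nat → NTrm F N) (a : N) :
    NTrm.subst σ (.nm a) = .nm a := by rw [NTrm.subst]

theorem NTrm.subst_app (σ : Nat → NTrm F N) (f : F) (ts : List (NTrm F N)) :
    NTrm.subst σ (.app f ts) = .app f (ts.map (NTrm.subst σ)) := by
  rw [NTrm.subst]; simp

theorem Trm.subst_app {G : Type} (σ : Nat → Trm G) (f : G) (ts : List (Trm G)) :
    Trm.subst σ (.app f ts) = .app f (ts.map (Trm.subst σ)) := by
  rw [Trm.subst]; simp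

theorem encodeN_app (E : N → Trm (F ⊕ N)) (f : F) (ts : List (NTrm F N)) :
    encodeN E (.app f ts) = Trm.app (Sum.inl f) (ts.map (encodeN E)) := by
  rw [encodeN]; simp

theorem Trm.subst_closed {G : Type} (σ : Nat → Trm G) (t : Trm G)
    (h : ∀ x, ¬ Trm.VarOcc x t) : Trm.subst σ t = t := by
  match t with
  | .var x => exact absurd Trm.VarOcc.var (h x)
  | .app f ts =>
    rw [Trm.subst_app]
    have : ts.map (Trm.subst σ) = ts.map id := by
      apply List.map_congr_left
      intro u hu
      exact Trm.subst_closed σ u (fun x hx => h x (.app hu hx))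
    rw [this, List.map_id]
termination_by sizeOf t
decreasing_by
  simp_wf
  have := List.sizeOf_lt_of_mem hu
  omega

theorem NTrm.subst_congr (σ τ : Nat → NTrm F N) (t : NTrm F N)
    (h : ∀ x, NTrm.VarOcc x t → σ x = τ x) : NTrm.subst σ t = NTrm.subst τ t := by
  match t with
  | .var x => rw [NTrm.subst_var, NTrm.subst_var]; exact h x .var
  | .nm a => rw [NTrm.subst_nm, NTrm.subst_nm]
  | .app f ts =>
    rw [NTrm.subst_app, NTrm.subst_app]
    congr 1
    apply List.map_congr_left
    intro u hu
    exact NTrm.subst_congr σ τ u (fun x hx => h x (.app hu hx))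
termination_by sizeOf t
decreasing_by
  simp_wf
  have := List.sizeOf_lt_of_mem hu
  omega

mutual

theorem encodeN_inj (E : N → Trm (F ⊕ N))
    (hEhead : ∀ a : N, ∃ args : List (Trm (F ⊕ N)), E a = Trm.app (Sum.inr a) args)
    (M M' : NTrm F N) (h : encodeN E M = encodeN E M') : M = M' := by
  match M, M' with
  | .var x, .var y =>
    rw [encodeN, encodeN] at h
    cases h; rfl
  | .var x, .nm a =>
    obtain ⟨args, ha⟩ := hEhead a
    rw [encodeN, encodeN, ha] at h
    cases h
  | .var x, .app f ts =>
    rw [encodeN, encodeN_app] at h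
    cases h
  | .nm a, .var y =>
    obtain ⟨args, ha⟩ := hEhead a
    rw [encodeN, encodeN, ha] at h
    cases h
  | .nm a, .nm b =>
    obtain ⟨args, ha⟩ := hEhead a
    obtain ⟨args', hb⟩ := hEhead b
    rw [encodeN, encodeN, ha, hb] at h
    cases h; rfl
  | .nm a, .app f ts =>
    obtain ⟨args, ha⟩ := hEhead a
    rw [encodeN, encodeN_app, ha] at h
    cases h
  | .app f ts, .var y =>
    rw [encodeN, encodeN_app] at h
    cases h
  | .app f ts, .nm a =>
    obtain ⟨args, ha⟩ := hEhead a
    rw [encodeN, encodeN_app, ha] at h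
    cases h
  | .app f ts, .app g us =>
    rw [encodeN_app, encodeN_app] at h
    injection h with h1 h2
    injection h1 with h1
    subst h1
    rw [encodeN_inj_list E hEhead ts us h2]
termination_by sizeOf M

theorem encodeN_inj_list (E : N → Trm (F ⊕ N))
    (hEhead : ∀ a : N, ∃ args : List (Trm (F ⊕ N)), E a = Trm.app (Sum.inr a) args)
    (l l' : List (NTrm F N)) (h : l.map (encodeN E) = l'.map (encodeN E)) : l = l' := by
  match l, l' with
  | [], [] => rfl
  | [], _ :: _ => simp at h
  | _ :: _, [] => simp at h
  | t :: r, t' :: r' =>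
    simp only [List.map_cons, List.cons.injEq] at h
    rw [encodeN_inj E hEhead t t' h.1, encodeN_inj_list E hEhead r r' h.2]
termination_by sizeOf l

end

end Aux

theorem Trm.subst_var {G : Type} (σ : Nat → Trm G) (x : Nat) :
    Trm.subst σ (.var x) = σ x := by rw [Trm.subst]

mutual

theorem encode_lifting_aux {F N : Type} (E : N → Trm (F ⊕ N))
    (hEhead : ∀ a : N, ∃ args : List (Trm (F ⊕ N)), E a = Trm.app (Sum.inr a) args)
    (hEclosed : ∀ a : N, ∀ x : Nat, ¬ Trm.VarOcc x (E a))
    (M M' : NTrm F N)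
    (hM' : ∀ x : Nat, ¬ NTrm.VarOcc x M')
    (σ : Nat → Trm (F ⊕ N))
    (h : encodeN E M' = Trm.subst σ (encodeN E M)) :
    ∃ σ' : Nat → NTrm F N,
      M' = NTrm.subst σ' M ∧ ∀ x : Nat, NTrm.VarOcc x M → encodeN E (σ' x) = σ x := by
  match M with
  | .var x =>
    rw [encodeN, Trm.subst_var] at h
    refine ⟨fun _ => M', ?_, ?_⟩
    · rw [NTrm.subst_var]
    · intro y hy
      cases hy
      exact h
  | .nm a =>
    rw [encodeN, Trm.subst_closed σ (E a) (hEclosed a)] at h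
    have hMa : M' = .nm a := encodeN_inj E hEhead M' (.nm a) (by rw [encodeN]; exact h)
    refine ⟨NTrm.var, ?_, ?_⟩
    · rw [hMa, NTrm.subst_nm]
    · intro x hx
      cases hx
  | .app f ts =>
    rw [encodeN_app, Trm.subst_app] at h
    match M', hM' with
    | .var y, hM' => exact absurd .var (hM' y)
    | .nm a, hM' =>
      obtain ⟨args, ha⟩ := hEhead a
      rw [encodeN, ha] at h
      cases h
    | .app g us, hM' =>
      rw [encodeN_app] at h
      injection h with h1 h2
      injection h1 with h1
      subst h1
      rw [List.map_map] at h2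
      have hclosed : ∀ t ∈ us, ∀ x, ¬ NTrm.VarOcc x t := fun t ht x hx => hM' x (.app ht hx)
      obtain ⟨σ', h1', h2'⟩ := encode_lifting_list E hEhead hEclosed ts us hclosed σ h2
      refine ⟨σ', ?_, ?_⟩
      · rw [NTrm.subst_app, h1']
      · intro x hx
        cases hx with
        | app hu hx => exact h2' x ⟨_, hu, hx⟩
termination_by sizeOf M

theorem encode_lifting_list {F N : Type} (E : N → Trm (F ⊕ N))
    (hEhead : ∀ a : N, ∃ args : List (Trm (F ⊕ N)), E a = Trm.app (Sum.inr a) args)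
    (hEclosed : ∀ a : N, ∀ x : Nat, ¬ Trm.VarOcc x (E a))
    (ts us : List (NTrm F N))
    (hclosed : ∀ t ∈ us, ∀ x, ¬ NTrm.VarOcc x t)
    (σ : Nat → Trm (F ⊕ N))
    (h : us.map (encodeN E) = ts.map (fun t => Trm.subst σ (encodeN E t))) :
    ∃ σ' : Nat → NTrm F N, us = ts.map (NTrm.subst σ') ∧
      ∀ x, (∃ t ∈ ts, NTrm.VarOcc x t) → encodeN E (σ' x) = σ x := by
  match ts, us with
  | [], [] =>
    exact ⟨NTrm.var, rfl, fun x ⟨t, ht, _⟩ => absurd ht (fun hm => List.not_mem_nil hm)⟩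
  | [], _ :: _ => simp at h
  | _ :: _, [] => simp at h
  | t :: r, t' :: r' =>
    simp only [List.map_cons, List.cons.injEq] at h
    obtain ⟨h1, h2⟩ := h
    have hc' : ∀ x, ¬ NTrm.VarOcc x t' := hclosed t' (by simp)
    obtain ⟨σ1, e1, p1⟩ := encode_lifting_aux E hEhead hEclosed t t' hc' σ h1
    obtain ⟨σ2, e2, p2⟩ :=
      encode_lifting_list E hEhead hEclosed r r' (fun u hu => hclosed u (by simp [hu])) σ h2
    classical
    refine ⟨fun x => if NTrm.VarOcc x t then σ1 x else σ2 x, ?_, ?_⟩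
    · simp only [List.map_cons, List.cons.injEq]
      constructor
      · rw [e1]
        apply NTrm.subst_congr
        intro x hx
        simp [hx]
      · rw [e2]
        apply List.map_congr_left
        intro u hu
        apply NTrm.subst_congr
        intro x hx
        by_cases hxt : NTrm.VarOcc x t
        · simp only [hxt, if_pos]
          apply encodeN_inj E hEhead
          rw [p2 x ⟨u, hu, hx⟩, p1 x hxt]
        · simp [hxt]
    · intro x hx
      by_cases hxt : NTrm.VarOcc x t
      · simp only [hxt, if_pos]
        exact p1 x hxt
      · simp only [hxt, if_neg, not_false_iff, ite_false]
        obtain ⟨u, hu, hxu⟩ := hx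
        rcases List.mem_cons.mp hu with huu | huu
        · exact absurd (huu ▸ hxu) hxt
        · exact p2 x ⟨u, huu, hxu⟩
termination_by sizeOf ts

end

/-- Lifting lemma for matching through an injective environment encoding: if `E` maps each
name `a` to a closed pattern headed by the name-function symbol of `a`, `M'` is a closed
term, and `σ` is a substitution on patterns with `E(M') = σ(E(M))`, then there is a
substitution `σ'` on terms with `M' = σ'(M)` and `E(σ'(x)) = σ(x)` for every variable `x`
occurring in `M`. -/
theorem encode_lifting {F N : Type} (E : N → Trm (F ⊕ N))
    (hEhead : ∀ a : N, ∃ args : List (Trm (F ⊕ N)), E a = Trm.app (Sum.inr a) args)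
    (hEclosed : ∀ a : N, ∀ x : Nat, ¬ Trm.VarOcc x (E a))
    (M M' : NTrm F N)
    (hM' : ∀ x : Nat, ¬ NTrm.VarOcc x M')
    (σ : Nat → Trm (F ⊕ N))
    (h : encodeN E M' = Trm.subst σ (encodeN E M)) :
    ∃ σ' : Nat → NTrm F N,
      M' = NTrm.subst σ' M ∧ ∀ x : Nat, NTrm.VarOcc x M → encodeN E (σ' x) = σ x :=
  encode_lifting_aux E hEhead hEclosed M M' hM' σ h
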